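/- Let h > 0, set σ(ξ) = (4/h²)·sin²(ξ·h/2) and Δt = h. Then for every ξ ∈ (0, π/h), σ'(ξ)/(√(4 − σ(ξ)·h²)·√(σ(ξ))) = 1; in particular this group-velocity expression tends to 1 as ξ → (π/h)⁻. -/

import Mathlib

open Filter Topology Real

/-- Exceptional case `(k, Δt) = (0, h)` of the group-velocity theorem:
for `σ(ξ) = (4/h²)·sin²(ξh/2)` and `Δt = h`, the numerical group velocity
`σ'(ξ)/(√(4 − σ(ξ)h²)·√(σ(ξ)))` is identically `1` on `(0, π/h)`; in
particular it tends to `1` as `ξ → (π/h)⁻`. -/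
theorem p0_critical_unit_group_velocity
    (h : ℝ) (hh : 0 < h)
    (σ : ℝ → ℝ)
    (hσ : ∀ ξ : ℝ, σ ξ = (4 / h ^ 2) * Real.sin (ξ * h / 2) ^ 2) :
    (∀ ξ ∈ Set.Ioo 0 (π / h),
        deriv σ ξ / (Real.sqrt (4 - σ ξ * h ^ 2) * Real.sqrt (σ ξ)) = 1)
    ∧ Tendsto
        (fun ξ : ℝ => deriv σ ξ / (Real.sqrt (4 - σ ξ * h ^ 2) * Real.sqrt (σ ξ)))
        (𝓝[<] (π / h)) (𝓝 1) := by
  have hmain : ∀ ξ ∈ Set.Ioo 0 (π / h),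
      deriv σ ξ / (Real.sqrt (4 - σ ξ * h ^ 2) * Real.sqrt (σ ξ)) = 1 := by
    intro ξ hξ
    obtain ⟨hξ0, hξπ⟩ := hξ
    have hθ0 : 0 < ξ * h / 2 := by positivity
    have hθπ : ξ * h / 2 < π / 2 := by
      have := (lt_div_iff₀ hh).mp hξπ
      linarith
    have hs : 0 < Real.sin (ξ * h / 2) :=
      Real.sin_pos_of_pos_of_lt_pi hθ0 (lt_trans hθπ (by linarith [Real.pi_pos]))
    have hc : 0 < Real.cos (ξ * h / 2) :=
      Real.cos_pos_of_mem_Ioo ⟨by linarith [Real.pi_pos], hθπ⟩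
    -- derivative
    have hd : HasDerivAt σ ((4 / h ^ 2) * (2 * Real.sin (ξ * h / 2) * (Real.cos (ξ * h / 2) * (h / 2)))) ξ := by
      have h1 : HasDerivAt (fun x : ℝ => x * h / 2) (h / 2) ξ := by
        simpa using ((hasDerivAt_id ξ).mul_const h).div_const 2
      have h2 : HasDerivAt (fun x : ℝ => Real.sin (x * h / 2)) (Real.cos (ξ * h / 2) * (h / 2)) ξ :=
        (Real.hasDerivAt_sin _).comp ξ h1
      have h3 := ((h2.pow 2).const_mul (4 / h ^ 2))
      have : σ = fun x => (4 / h ^ 2) * Real.sin (x * h / 2) ^ 2 := funext hσ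
      rw [this]
      exact h3.congr_deriv (by norm_num)
    have hderiv : deriv σ ξ = (4 / h) * (Real.sin (ξ * h / 2) * Real.cos (ξ * h / 2)) := by
      rw [hd.deriv]; field_simp
    have hσval := hσ ξ
    have h4 : 4 - σ ξ * h ^ 2 = 4 * Real.cos (ξ * h / 2) ^ 2 := by
      rw [hσval]
      have := Real.sin_sq_add_cos_sq (ξ * h / 2)
      field_simp
      nlinarith [this, Real.sin_sq_add_cos_sq (h * ξ / 2)]
    have hsqrt1 : Real.sqrt (4 - σ ξ * h ^ 2) = 2 * Real.cos (ξ * h / 2) := by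
      rw [h4]
      rw [show (4:ℝ) * Real.cos (ξ * h / 2) ^ 2 = (2 * Real.cos (ξ * h / 2)) ^ 2 by ring]
      exact Real.sqrt_sq (by positivity)
    have hsqrt2 : Real.sqrt (σ ξ) = (2 / h) * Real.sin (ξ * h / 2) := by
      rw [hσval]
      rw [show (4 / h ^ 2) * Real.sin (ξ * h / 2) ^ 2 = ((2 / h) * Real.sin (ξ * h / 2)) ^ 2 by ring]
      exact Real.sqrt_sq (by positivity)
    rw [hderiv, hsqrt1, hsqrt2]
    field_simp
    rw [mul_comm h ξ, mul_assoc, mul_div_assoc, div_self (by positivity)]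
    norm_num
  refine ⟨hmain, ?_⟩
  have hπh : 0 < π / h := div_pos Real.pi_pos hh
  have hev : ∀ᶠ ξ in 𝓝[<] (π / h),
      deriv σ ξ / (Real.sqrt (4 - σ ξ * h ^ 2) * Real.sqrt (σ ξ)) = 1 := by
    filter_upwards [Ioo_mem_nhdsLT_of_mem ⟨hπh, le_refl _⟩] with ξ hξ
    exact hmain ξ hξ
  exact Tendsto.congr' (hev.mono fun x hx => hx.symm) tendsto_const_nhds
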